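/- Let R be a commutative ring and q ∈ Rˣ a unit such that [n]_q := 1 − q^{−n} is a unit of R for every n ≥ 1, A an associative unital R-algebra, and z ∈ A nilpotent. Then (1 − z) · 𝓔_q(z) = 𝓔_q(q^{−1} • z). -/

import Mathlib

/-- The q-number `[n]_q = 1 - q^{-n}`, for a unit `q` of a commutative ring `R`. -/
noncomputable def qNumU {R : Type*} [CommRing R] (q : Rˣ) (n : ℕ) : R :=
  1 - ((q⁻¹ : Rˣ) : R) ^ n

/-- The q-factorial `[n]_q! = [1]_q [2]_q ⋯ [n]_q`, with `[0]_q! = 1`. -/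
noncomputable def qFactU {R : Type*} [CommRing R] (q : Rˣ) : ℕ → R
  | 0 => 1
  | n + 1 => qFactU q n * qNumU q (n + 1)

/-- The exponentiated q-dilogarithm `𝓔_q(z) = Σ_{n≥0} ([n]_q!)⁻¹ • z^n` of an algebra
element `z`; for nilpotent `z` this finitary sum (`finsum`) is the evident finite sum. -/
noncomputable def qE {R : Type*} [CommRing R] {A : Type*} [Ring A] [Algebra R A]
    (q : Rˣ) (z : A) : A :=
  ∑ᶠ n : ℕ, Ring.inverse (qFactU q n) • z ^ n

lemma qFactU_isUnit {R : Type*} [CommRing R] (q : Rˣ)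
    (hU : ∀ n : ℕ, 1 ≤ n → IsUnit (qNumU q n)) (n : ℕ) : IsUnit (qFactU q n) := by
  induction n with
  | zero => simp [qFactU]
  | succ n ih => exact ih.mul (hU (n + 1) (by omega))

lemma qFactU_inv_succ {R : Type*} [CommRing R] (q : Rˣ)
    (hU : ∀ n : ℕ, 1 ≤ n → IsUnit (qNumU q n)) (n : ℕ) :
    Ring.inverse (qFactU q (n + 1)) * qNumU q (n + 1) = Ring.inverse (qFactU q n) := by
  rw [show qFactU q (n + 1) = qFactU q n * qNumU q (n + 1) from rfl, Ring.mul_inverse_rev,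
    mul_comm (Ring.inverse (qNumU q (n + 1))), mul_assoc,
    Ring.inverse_mul_cancel _ (hU (n + 1) (by omega)), mul_one]

/-- The functional equation of the q-exponential, for nilpotent algebra elements:
`(1 - z) · 𝓔_q(z) = 𝓔_q(q⁻¹ • z)`. -/
theorem one_sub_mul_qE {R : Type*} [CommRing R] (q : Rˣ)
    (hU : ∀ n : ℕ, 1 ≤ n → IsUnit (qNumU q n))
    {A : Type*} [Ring A] [Algebra R A] (z : A) (hz : IsNilpotent z) :
    (1 - z) * qE q z = qE q (((q⁻¹ : Rˣ) : R) • z) := by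
  obtain ⟨N, hN⟩ := hz
  set a : ℕ → R := fun n => Ring.inverse (qFactU q n) with ha
  set c : ℕ → R := fun n => ((q⁻¹ : Rˣ) : R) ^ n * a n with hc
  -- reduce both finsums to finite sums over range N
  have hzero : ∀ m : ℕ, N ≤ m → z ^ m = 0 := fun m hm => pow_eq_zero_of_le hm hN
  have hL : qE q z = ∑ n ∈ Finset.range N, a n • z ^ n := by
    apply finsum_eq_sum_of_support_subset
    intro n hn
    simp only [Function.mem_support, ne_eq] at hn
    by_contra h
    simp only [Finset.coe_range, Set.mem_Iio, not_lt] at h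
    exact hn (by rw [hzero n h, smul_zero])
  have hR : qE q (((q⁻¹ : Rˣ) : R) • z) = ∑ n ∈ Finset.range N, c n • z ^ n := by
    have : qE q (((q⁻¹ : Rˣ) : R) • z) = ∑ᶠ n : ℕ, c n • z ^ n := by
      apply finsum_congr
      intro n
      simp only [hc, smul_pow, smul_smul]
      ring_nf
      exact congrArg (· • z ^ n) (mul_comm _ _)
    rw [this]
    apply finsum_eq_sum_of_support_subset
    intro n hn
    simp only [Function.mem_support, ne_eq] at hn
    by_contra h
    simp only [Finset.coe_range, Set.mem_Iio, not_lt] at h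
    exact hn (by rw [hzero n h, smul_zero])
  -- the key scalar identity
  have key : ∀ m : ℕ, a (m + 1) - c (m + 1) = a m := by
    intro m
    have : c (m + 1) = a (m + 1) * (1 - qNumU q (m + 1)) := by
      simp [hc, qNumU, mul_comm, mul_sub]
    rw [this, mul_sub, mul_one, sub_sub_cancel]
    simpa [ha, mul_comm] using qFactU_inv_succ q hU m
  -- error term
  set e : ℕ → A := fun n => Nat.rec 0 (fun m _ => a m • z ^ (m + 1)) n with he
  have main : ∀ M : ℕ, (1 - z) * ∑ n ∈ Finset.range M, a n • z ^ n
      = (∑ n ∈ Finset.range M, c n • z ^ n) - e M := by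
    intro M
    induction M with
    | zero => simp [he]
    | succ M ih =>
      have estep : (a M - c M) • z ^ M = e M := by
        cases M with
        | zero => simp [he, ha, hc, qFactU]
        | succ m => simp [he, key m]
      rw [Finset.sum_range_succ, Finset.sum_range_succ, mul_add, ih]
      have : (1 - z) * (a M • z ^ M) = a M • z ^ M - a M • z ^ (M + 1) := by
        rw [sub_mul, one_mul, mul_smul_comm, ← pow_succ']
      rw [this, show e (M + 1) = a M • z ^ (M + 1) from rfl]
      have : a M • z ^ M = c M • z ^ M + e M := by
        rw [← estep, sub_smul]; abel
      rw [this]; abel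
  have heN : e N = 0 := by
    cases N with
    | zero => simp [he]
    | succ m => simp [he, hzero (m + 1) le_rfl]
  rw [hL, hR, main N, heN, sub_zero]
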